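/- Let L ∈ 𝐋 and V ∈ 𝐕(L). Then for every u ∈ [0,1) one has 𝐎*(L,L) = 𝐎*(L, L+uV), and moreover 𝐎*(L,L) ⊆ 𝐎*(L, L+V). -/

import Mathlib

open Matrix Filter Topology
set_option linter.unusedSectionVars false
set_option linter.unusedVariables false
set_option maxHeartbeats 1000000

/-- Square matrices of size `dT × dT`, indexed by blocks: index `(t, i)` is
row/column `i` within block `t`. -/
abbrev Mat (d T : ℕ) := Matrix (Fin T × Fin d) (Fin T × Fin d) ℝ

/-- The `t`-th diagonal `d × d` block of a `dT × dT` matrix. -/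
def blk {d T : ℕ} (A : Mat d T) (t : Fin T) : Matrix (Fin d) (Fin d) ℝ :=
  fun i j => A (t, i) (t, j)

/-- The `t`-th block column of a `dT × dT` matrix, a `dT × d` matrix. -/
def colBlk {d T : ℕ} (A : Mat d T) (t : Fin T) : Matrix (Fin T × Fin d) (Fin d) ℝ :=
  fun p j => A p (t, j)

/-- Membership in `𝐋`: block lower triangular matrices. -/
def memL {d T : ℕ} (A : Mat d T) : Prop :=
  ∀ (t s : Fin T) (i j : Fin d), t < s → A (t, i) (s, j) = 0

/-- Membership in `𝐎`: block diagonal matrices with orthogonal `d × d` diagonal blocks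
(equivalently: block diagonal and orthogonal). -/
def memO {d T : ℕ} (O : Mat d T) : Prop :=
  (∀ (t s : Fin T) (i j : Fin d), t ≠ s → O (t, i) (s, j) = 0) ∧ Oᵀ * O = 1

/-- The Frobenius norm of a real matrix. -/
noncomputable def frobNorm {m n : Type*} [Fintype m] [Fintype n] (A : Matrix m n ℝ) : ℝ :=
  Real.sqrt (∑ i, ∑ j, (A i j) ^ 2)

/-- The Frobenius inner product of two real matrices. -/
noncomputable def frobInner {m n : Type*} [Fintype m] [Fintype n] (A B : Matrix m n ℝ) : ℝ :=
  ∑ i, ∑ j, A i j * B i j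

/-- The adapted Bures–Wasserstein distance `d_ABW(L, M) = inf_{O ∈ 𝐎} ‖L - M O‖_F`. -/
noncomputable def dABW {d T : ℕ} (L M : Mat d T) : ℝ :=
  sInf {r : ℝ | ∃ O : Mat d T, memO O ∧ r = frobNorm (L - M * O)}

/-- The set `𝐎*(L, M)` of optimizers of `inf_{O ∈ 𝐎} ‖L - M O‖_F`. -/
noncomputable def OStar {d T : ℕ} (L M : Mat d T) : Set (Mat d T) :=
  {O | memO O ∧ frobNorm (L - M * O) = dABW L M}

/-- The set `𝐕(L) = {M P - L : M ∈ 𝐋, P ∈ 𝐎*(L, M)}`. -/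
noncomputable def VSet {d T : ℕ} (L : Mat d T) : Set (Mat d T) :=
  {V | ∃ M P : Mat d T, memL M ∧ P ∈ OStar L M ∧ V = M * P - L}

/-- The set `𝒱(L) = {V ∈ 𝐋 : (Vᵀ L)_{t,t} is symmetric for all t}`. -/
def calV {d T : ℕ} (L : Mat d T) : Set (Mat d T) :=
  {V | memL V ∧ ∀ t : Fin T, (blk (Vᵀ * L) t).IsSymm}

/-- The set `𝐋^reg = {L ∈ 𝐋 : (Lᵀ L)_{t,t} is positive definite for all t}`. -/
def LReg {d T : ℕ} : Set (Mat d T) :=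
  {L | memL L ∧ ∀ t : Fin T, (blk (Lᵀ * L) t).PosDef}

/-- The sum of the singular values of a real square matrix `A`,
i.e. the trace of the positive semidefinite square root of `Aᵀ A`. -/
noncomputable def svSum {n : ℕ} (A : Matrix (Fin n) (Fin n) ℝ) : ℝ :=
  (((Matrix.posSemidef_conjTranspose_mul_self A).1.eigenvectorUnitary : Matrix (Fin n) (Fin n) ℝ) *
    diagonal (Real.sqrt ∘ (Matrix.posSemidef_conjTranspose_mul_self A).1.eigenvalues) *
    (star (Matrix.posSemidef_conjTranspose_mul_self A).1.eigenvectorUnitary : Matrix (Fin n) (Fin n) ℝ)).trace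

/-- The operator norm of a real matrix: the supremum of the euclidean norm `‖A x‖₂`
over the euclidean unit ball. -/
noncomputable def opNorm {m n : Type*} [Fintype m] [Fintype n] (A : Matrix m n ℝ) : ℝ :=
  sSup {r : ℝ | ∃ x : n → ℝ, (∑ j, (x j) ^ 2) ≤ 1 ∧ r = Real.sqrt (∑ i, (A.mulVec x i) ^ 2)}


section FrobBasics

variable {m n : Type*} [Fintype m] [Fintype n]

lemma frobInner_comm (A B : Matrix m n ℝ) : frobInner A B = frobInner B A := by
  simp [frobInner, mul_comm]

lemma frobInner_eq_trace {k : Type*} [Fintype k] (A B : Matrix k k ℝ) :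
    frobInner A B = (Aᵀ * B).trace := by
  simp only [frobInner, Matrix.trace, Matrix.diag, Matrix.mul_apply, Matrix.transpose_apply]
  exact Finset.sum_comm

lemma frobNorm_eq (A : Matrix m n ℝ) : frobNorm A = Real.sqrt (frobInner A A) := by
  simp [frobNorm, frobInner, pow_two]

lemma frobInner_self_nonneg (A : Matrix m n ℝ) : 0 ≤ frobInner A A :=
  Finset.sum_nonneg fun _ _ => Finset.sum_nonneg fun _ _ => mul_self_nonneg _

lemma eq_zero_of_frobInner_self (A : Matrix m n ℝ) (h : frobInner A A = 0) : A = 0 := by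
  have h1 := (Finset.sum_eq_zero_iff_of_nonneg
    (fun i _ => Finset.sum_nonneg fun j _ => mul_self_nonneg (A i j))).mp h
  ext i j
  have h2 := (Finset.sum_eq_zero_iff_of_nonneg
    (fun j _ => mul_self_nonneg (A i j))).mp (h1 i (Finset.mem_univ i)) j (Finset.mem_univ j)
  simpa [Matrix.zero_apply] using mul_self_eq_zero.mp h2

lemma frobInner_add_left (X Y Z : Matrix m n ℝ) :
    frobInner (X + Y) Z = frobInner X Z + frobInner Y Z := by
  simp [frobInner, add_mul, Finset.sum_add_distrib]

lemma frobInner_sub_left (X Y Z : Matrix m n ℝ) :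
    frobInner (X - Y) Z = frobInner X Z - frobInner Y Z := by
  simp [frobInner, sub_mul, Finset.sum_sub_distrib]

lemma frobInner_smul_left (c : ℝ) (X Z : Matrix m n ℝ) :
    frobInner (c • X) Z = c * frobInner X Z := by
  simp [frobInner, Finset.mul_sum, mul_assoc]

lemma frobInner_sub_right (X Y Z : Matrix m n ℝ) :
    frobInner X (Y - Z) = frobInner X Y - frobInner X Z := by
  rw [frobInner_comm, frobInner_sub_left, frobInner_comm Y X, frobInner_comm Z X]

lemma frobInner_sub_self (X Y : Matrix m n ℝ) :
    frobInner (X - Y) (X - Y)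
      = frobInner X X - 2 * frobInner X Y + frobInner Y Y := by
  rw [frobInner_sub_left, frobInner_sub_right, frobInner_sub_right, frobInner_comm Y X]
  ring

lemma frobInner_sq_le (X Y : Matrix m n ℝ) :
    frobInner X Y ^ 2 ≤ frobInner X X * frobInner Y Y := by
  have h : ∀ A B : Matrix m n ℝ, frobInner A B = ∑ p : m × n, A p.1 p.2 * B p.1 p.2 := by
    intro A B
    exact (Fintype.sum_prod_type' (f := fun i j => A i j * B i j)).symm
  have h2 : ∀ A : Matrix m n ℝ, frobInner A A = ∑ p : m × n, (A p.1 p.2) ^ 2 := by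
    intro A
    rw [h]
    exact Finset.sum_congr rfl fun p _ => (pow_two _).symm
  rw [h, h2, h2]
  exact Finset.sum_mul_sq_le_sq_mul_sq Finset.univ _ _

end FrobBasics

section Trace

variable {k : Type*} [Fintype k] [DecidableEq k]

lemma frobInner_one_right (C : Matrix k k ℝ) : frobInner C 1 = C.trace := by
  rw [frobInner_eq_trace, Matrix.mul_one, Matrix.trace_transpose]

lemma frobInner_mul_orth_self (M O : Matrix k k ℝ) (hO : O * Oᵀ = 1) :
    frobInner (M * O) (M * O) = frobInner M M := by
  rw [frobInner_eq_trace, frobInner_eq_trace, Matrix.transpose_mul,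
    Matrix.trace_mul_comm, Matrix.mul_assoc, ← Matrix.mul_assoc O, hO, Matrix.one_mul,
    Matrix.trace_mul_comm]

lemma transpose_eq_of_isHermitian {A : Matrix k k ℝ} (h : A.IsHermitian) : Aᵀ = A := by
  ext i j
  have := congrFun (congrFun h i) j
  simpa [Matrix.conjTranspose_apply] using this

lemma frobInner_eq_trace_of_fix {C O : Matrix k k ℝ} (hCsym : Cᵀ = C) (h : O * C = C) :
    frobInner C O = C.trace := by
  rw [frobInner_eq_trace, hCsym, Matrix.trace_mul_comm, h]

open scoped MatrixOrder in
lemma frobInner_trace_bound {C O : Matrix k k ℝ}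
    (hC : C.PosSemidef) (hO : Oᵀ * O = 1) :
    frobInner C O ≤ C.trace ∧ (frobInner C O = C.trace → O * C = C) := by
  have hSS : CFC.sqrt C * CFC.sqrt C = C := CFC.sqrt_mul_sqrt_self C hC.nonneg
  set S := CFC.sqrt C with hSdef
  have hSsym : Sᵀ = S := transpose_eq_of_isHermitian (CFC.sqrt_nonneg C).posSemidef.1
  have hCsym : Cᵀ = C := transpose_eq_of_isHermitian hC.1
  have key : frobInner C O = frobInner S (O * S) := by
    rw [frobInner_eq_trace, frobInner_eq_trace, hCsym, hSsym, ← hSS, Matrix.mul_assoc,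
      Matrix.trace_mul_comm, Matrix.mul_assoc]
  have htr : frobInner S S = C.trace := by
    rw [frobInner_eq_trace, hSsym, hSS]
  have hOS : frobInner (O * S) (O * S) = frobInner S S := by
    rw [frobInner_eq_trace, frobInner_eq_trace, Matrix.transpose_mul, Matrix.mul_assoc,
      ← Matrix.mul_assoc Oᵀ O S, hO, Matrix.one_mul]
  have hb : 0 ≤ frobInner S S := frobInner_self_nonneg S
  have hsq : frobInner S (O * S) ^ 2 ≤ frobInner S S ^ 2 := by
    have := frobInner_sq_le S (O * S)
    rw [hOS] at this
    calc frobInner S (O * S) ^ 2 ≤ frobInner S S * frobInner S S := this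
      _ = frobInner S S ^ 2 := (pow_two _).symm
  have hle : frobInner S (O * S) ≤ frobInner S S := by nlinarith [hsq, hb]
  constructor
  · rw [key, ← htr]; exact hle
  · intro h
    have heq : frobInner S (O * S) = frobInner S S := by rw [← key, h, htr]
    have hz : frobInner (S - O * S) (S - O * S) = 0 := by
      rw [frobInner_sub_self, heq, hOS]
      ring
    have hOSs : O * S = S := by
      have := eq_zero_of_frobInner_self _ hz
      have := sub_eq_zero.mp this
      exact this.symm
    rw [← hSS, ← Matrix.mul_assoc, hOSs]

end Trace

section BlockAux

variable {d T : ℕ}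

/-- Block diagonal part of a matrix. -/
def Dpart (A : Mat d T) : Mat d T := fun p q => if p.1 = q.1 then A p q else 0

lemma memO_blockDiag {O : Mat d T} (h : memO O) {p q : Fin T × Fin d} (hpq : p.1 ≠ q.1) :
    O p q = 0 := h.1 p.1 q.1 p.2 q.2 hpq

lemma aux_memO_one : memO (1 : Mat d T) := by
  constructor
  · intro t s i j h
    exact Matrix.one_apply_ne (fun hc => h (congrArg Prod.fst hc))
  · rw [Matrix.transpose_one, Matrix.one_mul]

lemma aux_memO_mul {O O' : Mat d T} (h : memO O) (h' : memO O') : memO (O * O') := by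
  constructor
  · intro t s i j hts
    rw [Matrix.mul_apply]
    refine Finset.sum_eq_zero fun r _ => ?_
    by_cases hr : r.1 = s
    · rw [h.1 t r.1 i r.2 (by rw [hr]; exact hts), zero_mul]
    · rw [h'.1 r.1 s r.2 j hr, mul_zero]
  · rw [Matrix.transpose_mul, Matrix.mul_assoc, ← Matrix.mul_assoc Oᵀ, h.2, Matrix.one_mul, h'.2]

lemma frobInner_Dpart (X O : Mat d T) (hO : ∀ p q : Fin T × Fin d, p.1 ≠ q.1 → O p q = 0) :
    frobInner X O = frobInner (Dpart X) O := by
  unfold frobInner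
  refine Finset.sum_congr rfl fun i _ => Finset.sum_congr rfl fun j _ => ?_
  by_cases h : i.1 = j.1
  · rw [show Dpart X i j = X i j from if_pos h]
  · rw [hO i j h, mul_zero, mul_zero]

lemma Dpart_transpose_mul (P X : Mat d T) (hP : ∀ p q : Fin T × Fin d, p.1 ≠ q.1 → P p q = 0) :
    Dpart (Pᵀ * X) = Pᵀ * Dpart X := by
  ext p q
  by_cases h : p.1 = q.1
  · rw [show Dpart (Pᵀ * X) p q = (Pᵀ * X) p q from if_pos h]
    simp only [Matrix.mul_apply, Matrix.transpose_apply, Dpart]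
    refine Finset.sum_congr rfl fun r _ => ?_
    by_cases hr : r.1 = q.1
    · rw [if_pos hr]
    · rw [if_neg hr, hP r p (by rw [h]; exact hr), zero_mul, mul_zero]
  · rw [show Dpart (Pᵀ * X) p q = 0 from if_neg h]
    simp only [Matrix.mul_apply, Matrix.transpose_apply, Dpart]
    symm
    refine Finset.sum_eq_zero fun r _ => ?_
    by_cases hr : r.1 = q.1
    · rw [hP r p (fun hc => h (by rw [← hc]; exact hr)), zero_mul]
    · rw [if_neg hr, mul_zero]

lemma Dpart_add (X Y : Mat d T) : Dpart (X + Y) = Dpart X + Dpart Y := by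
  ext p q
  simp only [Dpart, Matrix.add_apply]
  split <;> simp

lemma Dpart_sub (X Y : Mat d T) : Dpart (X - Y) = Dpart X - Dpart Y := by
  ext p q
  simp only [Dpart, Matrix.sub_apply]
  split <;> simp

lemma Dpart_smul (c : ℝ) (X : Mat d T) : Dpart (c • X) = c • Dpart X := by
  ext p q
  simp only [Dpart, Matrix.smul_apply, smul_eq_mul]
  split <;> simp

/-- Restriction of a vector to block `t`. -/
def xt (t : Fin T) (x : Fin T × Fin d → ℝ) : Fin T × Fin d → ℝ :=
  fun q => if q.1 = t then x q else 0

lemma Dpart_mulVec (X : Mat d T) (x : Fin T × Fin d → ℝ) (p : Fin T × Fin d) :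
    (Dpart X *ᵥ x) p = (X *ᵥ xt p.1 x) p := by
  simp only [Matrix.mulVec, dotProduct, Dpart, xt]
  refine Finset.sum_congr rfl fun q _ => ?_
  by_cases h : p.1 = q.1
  · rw [if_pos h, if_pos h.symm]
  · rw [if_neg h, if_neg (fun hc => h hc.symm), zero_mul, mul_zero]

lemma xt_dot (t : Fin T) (x w : Fin T × Fin d → ℝ) :
    xt t x ⬝ᵥ w = ∑ i, x (t, i) * w (t, i) := by
  simp only [dotProduct, xt]
  rw [Fintype.sum_prod_type]
  rw [Finset.sum_eq_single t (fun s _ hs => Finset.sum_eq_zero fun i _ => by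
      rw [if_neg hs, zero_mul]) (fun h => absurd (Finset.mem_univ t) h)]
  exact Finset.sum_congr rfl fun i _ => by rw [if_pos rfl]

lemma ker_helper (Lm : Mat d T) (x : Fin T × Fin d → ℝ)
    (hx : Dpart (Lmᵀ * Lm) *ᵥ x = 0) (t : Fin T) : Lm *ᵥ xt t x = 0 := by
  have h1 : ∀ i, ((Lmᵀ * Lm) *ᵥ xt t x) (t, i) = 0 := by
    intro i
    have h := congrFun hx (t, i)
    rw [Dpart_mulVec] at h
    simpa using h
  have h3 : xt t x ⬝ᵥ ((Lmᵀ * Lm) *ᵥ xt t x) = 0 := by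
    rw [xt_dot]
    exact Finset.sum_eq_zero fun i _ => by rw [h1 i, mul_zero]
  rw [← Matrix.mulVec_mulVec, Matrix.dotProduct_mulVec, Matrix.vecMul_transpose] at h3
  exact dotProduct_self_eq_zero.mp h3

lemma C_posSemidef (Lm : Mat d T) : (Dpart (Lmᵀ * Lm)).PosSemidef := by
  refine Matrix.PosSemidef.of_dotProduct_mulVec_nonneg ?_ ?_
  · ext p q
    simp only [Matrix.conjTranspose_apply, star_trivial, Dpart, Matrix.mul_apply,
      Matrix.transpose_apply]
    by_cases h : p.1 = q.1
    · rw [if_pos h.symm, if_pos h]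
      exact Finset.sum_congr rfl fun r _ => mul_comm _ _
    · rw [if_neg (fun hc => h hc.symm), if_neg h]
  · intro x
    have hsx : star x = x := funext fun p => star_trivial _
    rw [hsx]
    have h1 : x ⬝ᵥ (Dpart (Lmᵀ * Lm) *ᵥ x) = ∑ t, xt t x ⬝ᵥ ((Lmᵀ * Lm) *ᵥ xt t x) := by
      rw [dotProduct, Fintype.sum_prod_type]
      refine Finset.sum_congr rfl fun t _ => ?_
      rw [xt_dot]
      refine Finset.sum_congr rfl fun i _ => ?_
      rw [Dpart_mulVec]
    rw [h1]
    refine Finset.sum_nonneg fun t _ => ?_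
    rw [← Matrix.mulVec_mulVec, Matrix.dotProduct_mulVec, Matrix.vecMul_transpose]
    exact Finset.sum_nonneg fun p _ => mul_self_nonneg _

end BlockAux

lemma exists_factor {k : Type*} [Fintype k] [DecidableEq k] (C B : Matrix k k ℝ)
    (h : ∀ x, C *ᵥ x = 0 → B *ᵥ x = 0) : ∃ W : Matrix k k ℝ, B = W * C := by
  classical
  set g := Matrix.toLin' C with hg
  set f := Matrix.toLin' B with hf
  have hker : LinearMap.ker g ≤ LinearMap.ker f := by
    intro x hx
    rw [LinearMap.mem_ker] at hx ⊢
    rw [hf, Matrix.toLin'_apply]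
    rw [hg, Matrix.toLin'_apply] at hx
    exact h x hx
  set gbar := (LinearMap.ker g).liftQ g le_rfl with hgbar
  have hinj : LinearMap.ker gbar = ⊥ := Submodule.ker_liftQ_eq_bot _ _ _ le_rfl
  obtain ⟨s, hs⟩ := gbar.exists_leftInverse_of_injective hinj
  set fbar := (LinearMap.ker g).liftQ f hker with hfbar
  refine ⟨LinearMap.toMatrix' (fbar ∘ₗ s), ?_⟩
  apply Matrix.toLin'.injective
  rw [Matrix.toLin'_mul, Matrix.toLin'_toMatrix']
  refine LinearMap.ext fun x => ?_
  show f x = fbar (s (g x))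
  have e1 : g x = gbar (Submodule.Quotient.mk x) := (Submodule.liftQ_apply _ _ _).symm
  have e2 : s (gbar (Submodule.Quotient.mk x)) = Submodule.Quotient.mk x := by
    have := congrFun (congrArg (fun (h : _ →ₗ[ℝ] _) => h.toFun) hs) (Submodule.Quotient.mk x)
    simpa using this
  rw [e1, e2]
  exact (Submodule.liftQ_apply _ _ _).symm

section OStarAux

variable {d T : ℕ}

lemma aux_mem_OStar_iff (L M O : Mat d T) :
    O ∈ OStar L M ↔ memO O ∧ ∀ O', memO O' →
      frobNorm (L - M * O) ≤ frobNorm (L - M * O') := by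
  have hne : {r : ℝ | ∃ O : Mat d T, memO O ∧ r = frobNorm (L - M * O)}.Nonempty :=
    ⟨_, 1, aux_memO_one, rfl⟩
  have hbdd : BddBelow {r : ℝ | ∃ O : Mat d T, memO O ∧ r = frobNorm (L - M * O)} := by
    refine ⟨0, ?_⟩
    rintro r ⟨O', _, rfl⟩
    exact Real.sqrt_nonneg _
  constructor
  · rintro ⟨h1, h2⟩
    refine ⟨h1, fun O' hO' => ?_⟩
    rw [h2]
    exact csInf_le hbdd ⟨O', hO', rfl⟩
  · rintro ⟨h1, h2⟩
    refine ⟨h1, le_antisymm ?_ ?_⟩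
    · refine le_csInf hne ?_
      rintro r ⟨O', hO', rfl⟩
      exact h2 O' hO'
    · exact csInf_le hbdd ⟨O, h1, rfl⟩

lemma frobInner_L_MO (L M O : Mat d T) (hO : memO O) :
    frobInner L (M * O) = frobInner (Dpart (Mᵀ * L)) O := by
  rw [← frobInner_Dpart (Mᵀ * L) O (fun p q h => memO_blockDiag hO h), frobInner_eq_trace,
    frobInner_eq_trace, Matrix.transpose_mul, Matrix.transpose_transpose, Matrix.mul_assoc]

lemma norm_le_iff_inner (L M : Mat d T) {O O' : Mat d T} (hO : memO O) (hO' : memO O') :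
    frobNorm (L - M * O) ≤ frobNorm (L - M * O') ↔
      frobInner (Dpart (Mᵀ * L)) O' ≤ frobInner (Dpart (Mᵀ * L)) O := by
  rw [frobNorm_eq, frobNorm_eq, Real.sqrt_le_sqrt_iff (frobInner_self_nonneg _),
    frobInner_sub_self, frobInner_sub_self,
    frobInner_mul_orth_self M O (mul_eq_one_comm.mp hO.2),
    frobInner_mul_orth_self M O' (mul_eq_one_comm.mp hO'.2),
    frobInner_L_MO L M O hO, frobInner_L_MO L M O' hO']
  constructor <;> intro h <;> linarith

lemma aux_mem_OStar_iff_inner (L M O : Mat d T) :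
    O ∈ OStar L M ↔ memO O ∧ ∀ O', memO O' →
      frobInner (Dpart (Mᵀ * L)) O' ≤ frobInner (Dpart (Mᵀ * L)) O := by
  rw [aux_mem_OStar_iff]
  refine and_congr_right fun h1 => forall_congr' fun O' => ?_
  exact imp_congr_right fun hO' => norm_le_iff_inner L M h1 hO'

end OStarAux

theorem stmt5' (d T : ℕ) (hd : 0 < d) (hT : 0 < T) (L V : Mat d T)
    (hL : memL L) (hV : V ∈ VSet L) :
    (∀ u : ℝ, u ∈ Set.Ico (0 : ℝ) 1 → OStar L L = OStar L (L + u • V)) ∧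
    OStar L L ⊆ OStar L (L + V) := by
  obtain ⟨M, P, hM, hP, hVdef⟩ := hV
  have hPO : memO P := hP.1
  have hCps : (Dpart (Lᵀ * L)).PosSemidef := C_posSemidef L
  have hCsym : (Dpart (Lᵀ * L))ᵀ = Dpart (Lᵀ * L) := transpose_eq_of_isHermitian hCps.1
  have hChar : ∀ O : Mat d T,
      O ∈ OStar L L ↔ memO O ∧ O * Dpart (Lᵀ * L) = Dpart (Lᵀ * L) := by
    intro O
    rw [aux_mem_OStar_iff_inner]
    refine and_congr_right fun h1 => ?_
    have hb := frobInner_trace_bound hCps h1.2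
    constructor
    · intro h2
      refine hb.2 (le_antisymm hb.1 ?_)
      have h3 := h2 1 aux_memO_one
      rwa [frobInner_one_right] at h3
    · intro h2 O' hO'
      rw [frobInner_eq_trace_of_fix hCsym h2]
      exact (frobInner_trace_bound hCps hO'.2).1
  have hPopt := ((aux_mem_OStar_iff_inner L M P).mp hP).2
  have hBtr : frobInner (Dpart (Mᵀ * L)) P = (Pᵀ * Dpart (Mᵀ * L)).trace := by
    rw [frobInner_eq_trace, ← Matrix.trace_transpose, Matrix.transpose_mul,
      Matrix.transpose_transpose]
  have hBmax : ∀ R, memO R →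
      frobInner (Pᵀ * Dpart (Mᵀ * L)) R ≤ (Pᵀ * Dpart (Mᵀ * L)).trace := by
    intro R hR
    have h1 : frobInner (Pᵀ * Dpart (Mᵀ * L)) R = frobInner (Dpart (Mᵀ * L)) (P * R) := by
      rw [frobInner_eq_trace, frobInner_eq_trace, Matrix.transpose_mul,
        Matrix.transpose_transpose, Matrix.mul_assoc]
    rw [h1, ← hBtr]
    exact hPopt (P * R) (aux_memO_mul hPO hR)
  have hker : ∀ x, Dpart (Lᵀ * L) *ᵥ x = 0 → (Pᵀ * Dpart (Mᵀ * L)) *ᵥ x = 0 := by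
    intro x hx
    have hG : Dpart (Mᵀ * L) *ᵥ x = 0 := by
      funext p
      rw [Dpart_mulVec, ← Matrix.mulVec_mulVec, ker_helper L x hx p.1]
      simp
    rw [← Matrix.mulVec_mulVec, hG, Matrix.mulVec_zero]
  obtain ⟨W, hW⟩ := exists_factor _ _ hker
  have hBO : ∀ O : Mat d T, O * Dpart (Lᵀ * L) = Dpart (Lᵀ * L) →
      frobInner (Pᵀ * Dpart (Mᵀ * L)) O = (Pᵀ * Dpart (Mᵀ * L)).trace := by
    intro O hOC
    rw [frobInner_eq_trace, hW, Matrix.transpose_mul, hCsym, Matrix.trace_mul_comm,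
      ← Matrix.mul_assoc, hOC]
    conv_lhs => rw [← Matrix.trace_transpose]
    rw [Matrix.transpose_mul, Matrix.transpose_transpose, hCsym]
  have hDu : ∀ u : ℝ, Dpart ((L + u • V)ᵀ * L)
      = Dpart (Lᵀ * L) + u • (Pᵀ * Dpart (Mᵀ * L) - Dpart (Lᵀ * L)) := by
    intro u
    have h1 : (L + u • V)ᵀ * L = Lᵀ * L + u • (Vᵀ * L) := by
      rw [Matrix.transpose_add, Matrix.transpose_smul, add_mul, smul_mul_assoc]
    have h2 : Vᵀ * L = Pᵀ * (Mᵀ * L) - Lᵀ * L := by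
      rw [hVdef, Matrix.transpose_sub, Matrix.transpose_mul, sub_mul, Matrix.mul_assoc]
    have h3 : Dpart (Vᵀ * L) = Pᵀ * Dpart (Mᵀ * L) - Dpart (Lᵀ * L) := by
      rw [h2, Dpart_sub, Dpart_transpose_mul _ _ (fun p q h => memO_blockDiag hPO h)]
    rw [h1, Dpart_add, Dpart_smul, h3]
  have main₁ : ∀ u : ℝ, 0 ≤ u → u ≤ 1 → OStar L L ⊆ OStar L (L + u • V) := by
    intro u hu0 hu1 O hO
    obtain ⟨hmO, hOC⟩ := (hChar O).mp hO
    rw [aux_mem_OStar_iff_inner, hDu u]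
    refine ⟨hmO, fun O' hO' => ?_⟩
    have ha' : frobInner (Dpart (Lᵀ * L)) O' ≤ (Dpart (Lᵀ * L)).trace :=
      (frobInner_trace_bound hCps hO'.2).1
    have hb' := hBmax O' hO'
    have haO : frobInner (Dpart (Lᵀ * L)) O = (Dpart (Lᵀ * L)).trace :=
      frobInner_eq_trace_of_fix hCsym hOC
    have hbO := hBO O hOC
    rw [frobInner_add_left, frobInner_add_left, frobInner_smul_left, frobInner_smul_left,
      frobInner_sub_left, frobInner_sub_left, haO, hbO]
    have e1 : 0 ≤ (1 - u) * ((Dpart (Lᵀ * L)).trace - frobInner (Dpart (Lᵀ * L)) O') :=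
      mul_nonneg (by linarith) (by linarith)
    have e2 : 0 ≤ u * ((Pᵀ * Dpart (Mᵀ * L)).trace - frobInner (Pᵀ * Dpart (Mᵀ * L)) O') :=
      mul_nonneg hu0 (by linarith)
    nlinarith [e1, e2]
  have main₂ : ∀ u : ℝ, 0 ≤ u → u < 1 → OStar L (L + u • V) ⊆ OStar L L := by
    intro u hu0 hu1 O hO
    rw [aux_mem_OStar_iff_inner, hDu u] at hO
    obtain ⟨hmO, hmax⟩ := hO
    have h1 := hmax 1 aux_memO_one
    rw [frobInner_add_left, frobInner_add_left, frobInner_smul_left, frobInner_smul_left,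
      frobInner_sub_left, frobInner_sub_left, frobInner_one_right, frobInner_one_right] at h1
    have ha : frobInner (Dpart (Lᵀ * L)) O ≤ (Dpart (Lᵀ * L)).trace :=
      (frobInner_trace_bound hCps hmO.2).1
    have hb := hBmax O hmO
    have e2 : 0 ≤ u * ((Pᵀ * Dpart (Mᵀ * L)).trace - frobInner (Pᵀ * Dpart (Mᵀ * L)) O) :=
      mul_nonneg hu0 (by linarith)
    have hu' : (0:ℝ) < 1 - u := by linarith
    have hge : (Dpart (Lᵀ * L)).trace ≤ frobInner (Dpart (Lᵀ * L)) O := by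
      nlinarith [h1, e2, hu']
    exact (hChar O).mpr ⟨hmO, (frobInner_trace_bound hCps hmO.2).2 (le_antisymm ha hge)⟩
  refine ⟨fun u hu => Set.Subset.antisymm (main₁ u hu.1 (le_of_lt hu.2)) (main₂ u hu.1 hu.2), ?_⟩
  have h := main₁ 1 zero_le_one le_rfl
  rwa [one_smul] at h

/-- for `V ∈ 𝐕(L)`, `𝐎*(L,L) = 𝐎*(L, L + uV)` for `u ∈ [0,1)`, and
`𝐎*(L,L) ⊆ 𝐎*(L, L + V)`. -/
theorem stmt5 (d T : ℕ) (hd : 0 < d) (hT : 0 < T) (L V : Mat d T)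
    (hL : memL L) (hV : V ∈ VSet L) :
    (∀ u : ℝ, u ∈ Set.Ico (0 : ℝ) 1 → OStar L L = OStar L (L + u • V)) ∧
    OStar L L ⊆ OStar L (L + V) := by
  exact stmt5' d T hd hT L V hL hV
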